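/- For all natural numbers m < n, the set {x₁, x₂, x₃, α_{2m}} is NOT a boundary of the good set S_{2n} = {y₁,…,y_{2n}}: there exists a function f on S_{2m+2} and prescribed values on {x₁,x₂,x₃,α_{2m}} for which equation (1) has no solution on S_{2m+2} extending those values. -/

import Mathlib

open scoped BigOperators

/-- Symbols: x₁,x₂,x₃,x₄ are 0,1,2,3 and αⱼ = j+3 (so all symbols are distinct naturals). -/
def α (j : ℕ) : ℕ := j + 3

/-- The points y₁, y₂, y₃, … of the paper's construction. -/
def y : ℕ → Fin 4 → ℕ := fun k =>
  if k = 1 then ![0, 1, 2, 3]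
  else if k = 2 then ![0, 1, α 1, α 2]
  else match k % 4 with
    | 1 => ![0, α (k - 1), α k, α (k + 1)]
    | 2 => ![α (k - 3), 1, α (k - 1), α k]
    | 3 => ![α k, α (k + 1), 2, α (k - 1)]
    | _ => ![α (k - 1), α k, α (k - 3), 3]

/-- u = (u₁,u₂,u₃,u₄) solves equation (1) for f on S. -/
def Solves (S : Set (Fin 4 → ℕ)) (f : (Fin 4 → ℕ) → ℂ) (u : Fin 4 → ℕ → ℂ) : Prop :=
  ∀ p ∈ S, f p = ∑ i, u i (p i)

/-- S is good: every complex function on S decomposes into coordinate functions. -/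
def IsGood (S : Set (Fin 4 → ℕ)) : Prop := ∀ f, ∃ u, Solves S f u

/-- i-th projection of S. -/
def proj (S : Set (Fin 4 → ℕ)) (i : Fin 4) : Set ℕ := (fun p => p i) '' S

/-- B is a boundary set of S: for every f and every prescription U on B,
equation (1) admits a solution agreeing with U on B, unique on the projections of S. -/
def IsBoundary (S : Set (Fin 4 → ℕ)) (B : Set ℕ) : Prop :=
  B ⊆ ⋃ i, proj S i ∧
  ∀ f : (Fin 4 → ℕ) → ℂ, ∀ U : ℕ → ℂ,
    (∃ u, Solves S f u ∧ ∀ i, ∀ a ∈ B ∩ proj S i, u i a = U a) ∧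
    ∀ u v, Solves S f u → (∀ i, ∀ a ∈ B ∩ proj S i, u i a = U a) →
      Solves S f v → (∀ i, ∀ a ∈ B ∩ proj S i, v i a = U a) →
      ∀ i, ∀ a ∈ proj S i, u i a = v i a

/-- S is full: a maximal good subset of the product of its projections. -/
def IsFull (S : Set (Fin 4 → ℕ)) : Prop :=
  IsGood S ∧ ∀ T : Set (Fin 4 → ℕ), S ⊆ T → (∀ p ∈ T, ∀ i, p i ∈ proj S i) →
    IsGood T → T = S

/-- Sₙ = {y₁,…,y_N}. -/
def Sn (N : ℕ) : Set (Fin 4 → ℕ) := y '' Set.Icc 1 N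

/-- The infinite set S = {y₁, y₂, …}. -/
def Sinf : Set (Fin 4 → ℕ) := y '' Set.Ici 1

/-- The extra point z = zₙ = (α_{4n−1}, x₂, α_{4n−3}, x₄). -/
def z (n : ℕ) : Fin 4 → ℕ := ![α (4 * n - 1), 1, α (4 * n - 3), 3]

/-- Two points of S are related iff some finite full subset of S contains both. -/
def Related (S : Set (Fin 4 → ℕ)) (p q : Fin 4 → ℕ) : Prop :=
  ∃ K, K ⊆ S ∧ K.Finite ∧ IsFull K ∧ p ∈ K ∧ q ∈ K

/-- The 4n×4n incidence matrix A_{4n}: rows y₂,…,y_{4n},zₙ; columns α₁,…,α_{4n}. -/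
def A (n : ℕ) : Matrix (Fin (4 * n)) (Fin (4 * n)) ℚ :=
  Matrix.of fun i j =>
    if ∃ k, (if (i : ℕ) = 4 * n - 1 then z n else y ((i : ℕ) + 2)) k = (j : ℕ) + 4
    then 1 else 0

lemma y_one : y 1 = ![0, 1, 2, 3] := rfl
lemma y_two : y 2 = ![0, 1, α 1, α 2] := rfl
lemma y_k3 (t : ℕ) : y (4*t+3) = ![α (4*t+3), α (4*t+4), 2, α (4*t+2)] := by
  have h1 : 4*t+3 ≠ 1 := by omega
  have h2 : 4*t+3 ≠ 2 := by omega
  have h4 : (4*t+3) % 4 = 3 := by omega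
  simp only [y, if_neg h1, if_neg h2, h4]; rfl
lemma y_k4 (t : ℕ) : y (4*t+4) = ![α (4*t+3), α (4*t+4), α (4*t+1), 3] := by
  have h1 : 4*t+4 ≠ 1 := by omega
  have h2 : 4*t+4 ≠ 2 := by omega
  have h4 : (4*t+4) % 4 = 0 := by omega
  simp only [y, if_neg h1, if_neg h2, h4]; rfl
lemma y_k5 (t : ℕ) : y (4*t+5) = ![0, α (4*t+4), α (4*t+5), α (4*t+6)] := by
  have h1 : 4*t+5 ≠ 1 := by omega
  have h2 : 4*t+5 ≠ 2 := by omega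
  have h4 : (4*t+5) % 4 = 1 := by omega
  simp only [y, if_neg h1, if_neg h2, h4]; rfl
lemma y_k6 (t : ℕ) : y (4*t+6) = ![α (4*t+3), 1, α (4*t+5), α (4*t+6)] := by
  have h1 : 4*t+6 ≠ 1 := by omega
  have h2 : 4*t+6 ≠ 2 := by omega
  have h4 : (4*t+6) % 4 = 2 := by omega
  simp only [y, if_neg h1, if_neg h2, h4]; rfl
lemma y_k7 (t : ℕ) : y (4*t+7) = ![α (4*t+7), α (4*t+8), 2, α (4*t+6)] := by
  have h1 : 4*t+7 ≠ 1 := by omega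
  have h2 : 4*t+7 ≠ 2 := by omega
  have h4 : (4*t+7) % 4 = 3 := by omega
  simp only [y, if_neg h1, if_neg h2, h4]; rfl
lemma y_k8 (t : ℕ) : y (4*t+8) = ![α (4*t+7), α (4*t+8), α (4*t+5), 3] := by
  have h1 : 4*t+8 ≠ 1 := by omega
  have h2 : 4*t+8 ≠ 2 := by omega
  have h4 : (4*t+8) % 4 = 0 := by omega
  simp only [y, if_neg h1, if_neg h2, h4]; rfl

noncomputable def Fdef : (Fin 4 → ℕ) → ℂ := fun p => if p 0 = 0 ∧ p 2 = 2 then 1 else 0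
lemma Fdef_eq (p : Fin 4 → ℕ) : Fdef p = if p 0 = 0 ∧ p 2 = 2 then 1 else 0 := rfl
lemma Fdef_left (w b c d : ℕ) : Fdef ![α w, b, c, d] = 0 := by
  rw [Fdef_eq, if_neg]; rintro ⟨h1, -⟩; simp [α] at h1
lemma Fdef_third (b w d : ℕ) : Fdef ![0, b, α w, d] = 0 := by
  rw [Fdef_eq, if_neg]; rintro ⟨-, h2⟩; simp [α] at h2
lemma Fdef_one : Fdef ![0,1,2,3] = 1 := by rw [Fdef_eq, if_pos]; simp
lemma sum4 (u : Fin 4 → ℕ → ℂ) (a b c d : ℕ) :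
    (∑ i : Fin 4, u i (![a,b,c,d] i)) = u 0 a + u 1 b + u 2 c + u 3 d := by
  simp [Fin.sum_univ_four]

lemma key_lemma (m : ℕ) (hm : 1 ≤ m) :
    ∃ (f : (Fin 4 → ℕ) → ℂ) (U : ℕ → ℂ),
      ¬ ∃ u, Solves (Sn (2 * m + 2)) f u ∧
        ∀ i, ∀ a ∈ ({0, 1, 2, α (2 * m)} : Set ℕ) ∩ proj (Sn (2 * m + 2)) i,
          u i a = U a := by
  refine ⟨Fdef, 0, ?_⟩
  rintro ⟨u, hs, hp⟩
  set N := 2 * m + 2 with hN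
  have hmem : ∀ k, 1 ≤ k → k ≤ N → y k ∈ Sn N := fun k h1 h2 => ⟨k, ⟨h1, h2⟩, rfl⟩
  have E : ∀ k (a b c d : ℕ), 1 ≤ k → k ≤ N → y k = ![a,b,c,d] →
      Fdef ![a,b,c,d] = u 0 a + u 1 b + u 2 c + u 3 d := by
    intro k a b c d h1 h2 hy
    have h := hs (y k) (hmem k h1 h2)
    rw [hy] at h
    rw [h, sum4]
  have hp' : ∀ i a, a ∈ ({0,1,2,α (2*m)} : Set ℕ) → a ∈ proj (Sn N) i → u i a = 0 := by
    intro i a hB hP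
    simpa using hp i a ⟨hB, hP⟩
  have h00 : u 0 0 = 0 :=
    hp' 0 0 (by simp) ⟨y 1, hmem 1 (by omega) (by omega), by rw [y_one]; rfl⟩
  have h11 : u 1 1 = 0 :=
    hp' 1 1 (by simp) ⟨y 1, hmem 1 (by omega) (by omega), by rw [y_one]; rfl⟩
  have h22 : u 2 2 = 0 :=
    hp' 2 2 (by simp) ⟨y 1, hmem 1 (by omega) (by omega), by rw [y_one]; rfl⟩
  -- the key inductive evaluation
  have val : ∀ t, 4*t+4 ≤ N → (3:ℂ) * 4^(t+1) * u 3 (α (4*t+2)) = 2 * 4^(t+1) - 2 := by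
    intro t
    induction t with
    | zero =>
      intro h
      have hy3 : y 3 = ![α 3, α 4, 2, α 2] := y_k3 0
      have hy4 : y 4 = ![α 3, α 4, α 1, 3] := y_k4 0
      have e1 := E 1 0 1 2 3 (by omega) (by omega) y_one
      have e2 := E 2 0 1 (α 1) (α 2) (by omega) (by omega) y_two
      have e3 := E 3 (α 3) (α 4) 2 (α 2) (by omega) (by omega) hy3
      have e4 := E 4 (α 3) (α 4) (α 1) 3 (by omega) (by omega) hy4
      rw [Fdef_one] at e1
      rw [Fdef_third] at e2
      rw [Fdef_left] at e3
      rw [Fdef_left] at e4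
      show (3:ℂ) * 4^(0+1) * u 3 (α (4*0+2)) = 2 * 4^(0+1) - 2
      norm_num
      linear_combination -6*e1 - 6*e2 - 6*e3 + 6*e4 - 12*h00 - 12*h11 - 12*h22
    | succ t ih =>
      intro h
      have ih' := ih (by omega)
      have e3 := E (4*t+3) _ _ _ _ (by omega) (by omega) (y_k3 t)
      have e5 := E (4*t+5) _ _ _ _ (by omega) (by omega) (y_k5 t)
      have e6 := E (4*t+6) _ _ _ _ (by omega) (by omega) (y_k6 t)
      have e7 := E (4*t+7) _ _ _ _ (by omega) (by omega) (y_k7 t)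
      have e8 := E (4*t+8) _ _ _ _ (by omega) (by omega) (y_k8 t)
      rw [Fdef_left] at e3 e6 e7 e8
      rw [Fdef_third] at e5
      -- u 3 3 = 1
      have e1 := E 1 0 1 2 3 (by omega) (by omega) y_one
      rw [Fdef_one] at e1
      have hidx : 4*(t+1)+2 = 4*t+6 := by omega
      rw [hidx]
      linear_combination (-(12:ℂ)*4^t)*e5 - ((12:ℂ)*4^t)*e6 + ((12:ℂ)*4^t)*e3
        - ((24:ℂ)*4^t)*e7 + ((24:ℂ)*4^t)*e8 + ih' - ((24:ℂ)*4^t)*e1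
        - ((36:ℂ)*4^t)*h00 - ((36:ℂ)*4^t)*h11 - ((36:ℂ)*4^t)*h22
  -- case split on parity of m
  rcases Nat.even_or_odd m with ⟨j, hj⟩ | ⟨j, hj⟩
  · -- m even, m = 2j, j ≥ 1; write j = t+1? use j-1: set t := j-1, m = 2t+2, N = 4t+6
    obtain ⟨t, rfl⟩ : ∃ t, m = 2*t+2 := ⟨j-1, by omega⟩
    have hNe : N = 4*t+6 := by omega
    -- prescribed: u 1 (α (4t+4)) = 0
    have hc : u 1 (α (4*t+4)) = 0 := by
      refine hp' 1 (α (4*t+4)) ?_ ⟨y (4*t+3), hmem (4*t+3) (by omega) (by omega), ?_⟩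
      · have : 2*(2*t+2) = 4*t+4 := by omega
        rw [this]; simp
      · rw [y_k3 t]; rfl
    have e3 := E (4*t+3) _ _ _ _ (by omega) (by omega) (y_k3 t)
    have e5 := E (4*t+5) _ _ _ _ (by omega) (by omega) (y_k5 t)
    have e6 := E (4*t+6) _ _ _ _ (by omega) (by omega) (y_k6 t)
    rw [Fdef_left] at e3 e6
    rw [Fdef_third] at e5
    have hA : u 3 (α (4*t+2)) = 0 := by
      linear_combination -e3 + e6 - e5 - 2*hc - h22 - h00 + h11
    have hv := val t (by omega)
    rw [hA] at hv
    have h4 : ((2:ℂ) * 4^(t+1) - 2) = 0 := by linear_combination -hv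
    have : ((4:ℕ):ℂ)^(t+1) = 1 := by push_cast; linear_combination h4/2
    have h1 : (4:ℕ)^(t+1) = 1 := by exact_mod_cast (by push_cast at this ⊢; exact this : ((4^(t+1):ℕ):ℂ) = ((1:ℕ):ℂ))
    have := Nat.one_lt_pow (by omega : t+1 ≠ 0) (by omega : 1 < 4)
    omega
  · -- m odd, m = 2j+1, N = 4j+4
    obtain ⟨t, rfl⟩ : ∃ t, m = 2*t+1 := ⟨j, by omega⟩
    have hNe : N = 4*t+4 := by omega
    have hA : u 3 (α (4*t+2)) = 0 := by
      refine hp' 3 (α (4*t+2)) ?_ ⟨y (4*t+3), hmem (4*t+3) (by omega) (by omega), ?_⟩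
      · have : 2*(2*t+1) = 4*t+2 := by omega
        rw [this]; simp
      · rw [y_k3 t]; rfl
    have hv := val t (by omega)
    rw [hA] at hv
    have h4 : ((2:ℂ) * 4^(t+1) - 2) = 0 := by linear_combination -hv
    have : ((4:ℕ):ℂ)^(t+1) = 1 := by push_cast; linear_combination h4/2
    have h1 : (4:ℕ)^(t+1) = 1 := by exact_mod_cast (by push_cast at this ⊢; exact this : ((4^(t+1):ℕ):ℂ) = ((1:ℕ):ℂ))
    have := Nat.one_lt_pow (by omega : t+1 ≠ 0) (by omega : 1 < 4)
    omega


/-- for 1 ≤ m < n, {x₁,x₂,x₃,α_{2m}} is NOT a boundary of S_{2n}: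
there is an f on S_{2m+2} and a prescription U on the set for which equation (1)
has no solution extending U. -/
theorem stmt_7 (m n : ℕ) (hm : 1 ≤ m) (hmn : m < n) :
    (∃ (f : (Fin 4 → ℕ) → ℂ) (U : ℕ → ℂ),
      ¬ ∃ u, Solves (Sn (2 * m + 2)) f u ∧
        ∀ i, ∀ a ∈ ({0, 1, 2, α (2 * m)} : Set ℕ) ∩ proj (Sn (2 * m + 2)) i,
          u i a = U a) ∧
    ¬ IsBoundary (Sn (2 * n)) {0, 1, 2, α (2 * m)} := by
  constructor
  · exact key_lemma m hm
  · intro hB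
    obtain ⟨f, U, hf⟩ := key_lemma m hm
    have hsub : Sn (2 * m + 2) ⊆ Sn (2 * n) :=
      Set.image_mono (f := y) (Set.Icc_subset_Icc le_rfl (by omega))
    obtain ⟨⟨u, hu, hpr⟩, -⟩ := hB.2 f U
    exact hf ⟨u, fun p hp => hu p (hsub hp),
      fun i a ha => hpr i a ⟨ha.1, Set.image_mono hsub ha.2⟩⟩
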